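/- Let Λ be a compact invariant set of a C¹ vector field X on M³ admitting a continuous invariant (under the tangent flow Φ_t) splitting T_Λ M³ = E^{ss} ⊕ E^{cu} with dim E^{ss} = 1, E^{ss} uniformly contracting, and the splitting dominated. Suppose every point x ∈ Λ satisfies: the α-limit set α(x) is a proper compact invariant subset of Λ on which E^{cu} is area-expanding (i.e. lim_{t→∞} |det Φ_{−t}|_{E^{cu}(y)}| = 0 for y with α-orbit in that subset, uniformly in the sense that each proper invariant subset is singular hyperbolic). Then Λ itself is singular hyperbolic: E^{cu} is area-expanding on all of Λ, i.e. there are C ≥ 1 and λ > 0 with |det Φ_{−t}|_{E^{cu}(x)}| ≤ C e^{−λt} for all x ∈ Λ and t ≥ 0. -/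

import Mathlib

open Filter Topology Set

/-- The α-limit set of a point under a flow on a metric space. -/
def alphaSet {M : Type*} [MetricSpace M] (φ : ℝ → M → M) (x : M) : Set M :=
  {y | ∀ ε > (0 : ℝ), ∀ T : ℝ, ∃ t ≥ T, dist (φ (-t) x) y < ε}

/-- Auxiliary sequence of times built by iterating a choice of "good time". -/
def iterSeq {M : Type*} (φ : ℝ → M → M) (f : M → ℝ) (x : M) : ℕ → ℝ
  | 0 => 0
  | j + 1 => iterSeq φ f x j + f (φ (-(iterSeq φ f x j)) x)

@[simp] lemma iterSeq_zero {M : Type*} (φ : ℝ → M → M) (f : M → ℝ) (x : M) :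
    iterSeq φ f x 0 = 0 := rfl

lemma iterSeq_succ {M : Type*} (φ : ℝ → M → M) (f : M → ℝ) (x : M) (j : ℕ) :
    iterSeq φ f x (j + 1) = iterSeq φ f x j + f (φ (-(iterSeq φ f x j)) x) := rfl

theorem stmt16 {M : Type*} [MetricSpace M] [CompactSpace M]
    (φ : ℝ → M → M) (hφ : Continuous fun p : ℝ × M => φ p.1 p.2)
    (hφ0 : ∀ x, φ 0 x = x) (hφadd : ∀ s t x, φ (s + t) x = φ s (φ t x))
    (Λ : Set M) (hΛne : Λ.Nonempty) (hΛcomp : IsCompact Λ)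
    (hΛinv : ∀ t : ℝ, φ t '' Λ = Λ)
    -- the partially hyperbolic splitting, via norm cocycles:
    (a : ℝ → M → ℝ) (hapos : ∀ t x, 0 < a t x)
    (C₁ lam₁ : ℝ) (hC₁ : 1 ≤ C₁) (hlam₁ : 0 < lam₁)
    (hss : ∀ x ∈ Λ, ∀ t : ℝ, 0 ≤ t → a t x ≤ C₁ * Real.exp (-lam₁ * t))
    (b : ℝ → M → ℝ) (hbpos : ∀ t x, 0 < b t x)
    (Cd lamd : ℝ) (hCd : 1 ≤ Cd) (hlamd : 0 < lamd)
    (hdom : ∀ x ∈ Λ, ∀ t : ℝ, 0 ≤ t → a t x * b t (φ t x) ≤ Cd * Real.exp (-lamd * t))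
    -- the backward area cocycle on `E^{cu}`:
    (g : ℝ → M → ℝ) (hgc : Continuous fun p : ℝ × M => g p.1 p.2)
    (hgpos : ∀ t x, 0 < g t x) (hg0 : ∀ x, g 0 x = 1)
    (hgcoc : ∀ s t x, g (s + t) x = g s (φ (-t) x) * g t x)
    -- every α-limit set is a proper invariant subset which is singular hyperbolic:
    (halpha : ∀ x ∈ Λ, alphaSet φ x ⊆ Λ ∧ alphaSet φ x ≠ Λ ∧
      ∃ C : ℝ, 1 ≤ C ∧ ∃ lam : ℝ, 0 < lam ∧
        ∀ y ∈ alphaSet φ x, ∀ t : ℝ, 0 ≤ t → g t y ≤ C * Real.exp (-lam * t)) :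
    ∃ C : ℝ, 1 ≤ C ∧ ∃ lam : ℝ, 0 < lam ∧
      ∀ x ∈ Λ, ∀ t : ℝ, 0 ≤ t → g t x ≤ C * Real.exp (-lam * t) := by
  classical
  -- invariance of Λ
  have hinv : ∀ (t : ℝ) (x : M), x ∈ Λ → φ t x ∈ Λ := by
    intro t x hx
    rw [← hΛinv t]
    exact ⟨x, hx, rfl⟩
  -- continuity of `g s ·`
  have hgz : ∀ s : ℝ, Continuous fun z : M => g s z := by
    intro s
    exact hgc.comp (continuous_const.prodMk continuous_id)
  -- Step A: along every `x ∈ Λ`, eventually the cocycle value drops below 1/2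
  have stepA : ∀ x ∈ Λ, ∃ τ : ℝ, 0 < τ ∧ g τ x < 1 / 2 := by
    intro x hx
    obtain ⟨hsub, -, C, hC, lam, hlam, hdec⟩ := halpha x hx
    set s : ℝ := (Real.log (2 * C) + 1) / lam with hs_def
    have h2C : (1 : ℝ) < 2 * C := by linarith
    have hlog : 0 < Real.log (2 * C) := Real.log_pos h2C
    have hs : 0 < s := div_pos (by linarith) hlam
    have hsmall : C * Real.exp (-lam * s) < 1 / 2 := by
      have h1 : -lam * s = -(Real.log (2 * C) + 1) := by
        field_simp [hs_def]
        rw [hs_def, mul_div_cancel₀ _ hlam.ne']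
      rw [h1, neg_add, Real.exp_add, Real.exp_neg,
        Real.exp_log (by linarith : (0 : ℝ) < 2 * C)]
      have he : Real.exp (-1) < 1 := Real.exp_lt_one_iff.mpr (by norm_num)
      have hCpos : (0 : ℝ) < C := by linarith
      calc C * ((2 * C)⁻¹ * Real.exp (-1)) = Real.exp (-1) / 2 := by
            field_simp
        _ < 1 / 2 := by linarith
    -- eventually along the backward orbit, `g s` is at most 1/2
    have key : ∃ T : ℝ, 0 ≤ T ∧ ∀ t : ℝ, T ≤ t → g s (φ (-t) x) ≤ 1 / 2 := by
      by_contra hcon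
      push_neg at hcon
      have hcon' : ∀ n : ℕ, ∃ t : ℝ, (n : ℝ) ≤ t ∧ 1 / 2 < g s (φ (-t) x) :=
        fun n => hcon (n : ℝ) (Nat.cast_nonneg n)
      choose tf htf hgt using hcon'
      obtain ⟨y, -, ψ, hψ, hlim⟩ :=
        IsCompact.tendsto_subseq (isCompact_univ (X := M))
          (fun n => mem_univ (φ (-(tf n)) x))
      have hy : y ∈ alphaSet φ x := by
        intro ε hε T
        obtain ⟨K, hK⟩ := Metric.tendsto_atTop.mp hlim ε hε
        set k : ℕ := max K ⌈T⌉₊ with hk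
        refine ⟨tf (ψ k), ?_, ?_⟩
        · have h1 : (T : ℝ) ≤ (⌈T⌉₊ : ℕ) := Nat.le_ceil T
          have h2 : (⌈T⌉₊ : ℕ) ≤ k := le_max_right _ _
          have h3 : (k : ℕ) ≤ ψ k := hψ.le_apply
          have h4 : ((ψ k : ℕ) : ℝ) ≤ tf (ψ k) := htf (ψ k)
          have : ((⌈T⌉₊ : ℕ) : ℝ) ≤ ((ψ k : ℕ) : ℝ) := by
            exact_mod_cast le_trans h2 h3
          linarith
        · exact hK k (le_max_left _ _)
      have hlim2 : Tendsto (fun k => g s (φ (-(tf (ψ k))) x)) atTop (𝓝 (g s y)) :=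
        ((hgz s).tendsto y).comp hlim
      have hge : (1 : ℝ) / 2 ≤ g s y :=
        ge_of_tendsto hlim2 (Eventually.of_forall fun k => (hgt (ψ k)).le)
      have hle : g s y ≤ C * Real.exp (-lam * s) := hdec y hy s hs.le
      linarith
    obtain ⟨T, hT0, hT⟩ := key
    -- iterate the cocycle identity
    have iter : ∀ n : ℕ, g (T + n * s) x ≤ (1 / 2 : ℝ) ^ n * g T x := by
      intro n
      induction n with
      | zero => simp
      | succ n ih =>
        have h1 : T + ((n : ℝ) + 1) * s = s + (T + n * s) := by ring
        have hns : (0 : ℝ) ≤ (n : ℝ) * s :=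
          mul_nonneg (Nat.cast_nonneg n) hs.le
        have h2 : g s (φ (-(T + n * s)) x) ≤ 1 / 2 := hT _ (by linarith)
        have h3 : g (T + ((n : ℝ) + 1) * s) x
            = g s (φ (-(T + n * s)) x) * g (T + n * s) x := by
          rw [h1, hgcoc]
        push_cast
        rw [h3]
        have hpos := (hgpos (T + n * s) x).le
        calc g s (φ (-(T + n * s)) x) * g (T + n * s) x
            ≤ (1 / 2) * ((1 / 2 : ℝ) ^ n * g T x) := by
              apply mul_le_mul h2 ih hpos (by norm_num)
          _ = (1 / 2 : ℝ) ^ (n + 1) * g T x := by ring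
    -- choose n making the bound drop below 1/2
    have hgT : 0 < g T x := hgpos T x
    obtain ⟨n₀, hn₀⟩ :=
      exists_pow_lt_of_lt_one (div_pos (by norm_num : (0:ℝ) < 1/2) hgT)
        (by norm_num : (1 / 2 : ℝ) < 1)
    set n : ℕ := n₀ + 1 with hn
    have hmono : ((1 : ℝ) / 2) ^ n ≤ (1 / 2 : ℝ) ^ n₀ :=
      pow_le_pow_of_le_one (by norm_num) (by norm_num) (by omega)
    refine ⟨T + n * s, ?_, ?_⟩
    · have : (1 : ℝ) ≤ (n : ℝ) := by exact_mod_cast Nat.one_le_iff_ne_zero.mpr (by omega)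
      nlinarith
    · have h1 := iter n
      have h2 : ((1 : ℝ) / 2) ^ n * g T x < 1 / 2 := by
        have := mul_lt_mul_of_pos_right hn₀ hgT
        rw [div_mul_cancel₀] at this
        · calc ((1 : ℝ) / 2) ^ n * g T x ≤ (1 / 2 : ℝ) ^ n₀ * g T x :=
              mul_le_mul_of_nonneg_right hmono hgT.le
            _ < 1 / 2 := this
        · exact ne_of_gt hgT
      linarith
  -- Step B: a uniform finite family of times by compactness
  choose! τof hτpos hτlt using stepA
  have stepB : ∃ m0 N : ℝ, 0 < m0 ∧ m0 ≤ N ∧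
      ∀ z ∈ Λ, ∃ τ : ℝ, m0 ≤ τ ∧ τ ≤ N ∧ g τ z < 1 / 2 := by
    have hopen : ∀ i ∈ Λ, IsOpen {z : M | g (τof i) z < 1 / 2} :=
      fun i _ => isOpen_lt (hgz (τof i)) continuous_const
    have hcov : Λ ⊆ ⋃ i ∈ Λ, {z : M | g (τof i) z < 1 / 2} := by
      intro z hz
      exact mem_biUnion hz (hτlt z hz)
    obtain ⟨F, hFsub, hFfin, hFcov⟩ :=
      hΛcomp.elim_finite_subcover_image hopen hcov
    have hFne : F.Nonempty := by
      obtain ⟨z, hz⟩ := hΛne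
      obtain ⟨i, hi, -⟩ := mem_iUnion₂.mp (hFcov hz)
      exact ⟨i, hi⟩
    set Fs : Finset M := hFfin.toFinset with hFs
    have hFsne : Fs.Nonempty := by
      simpa [hFs, Set.Finite.toFinset_nonempty] using hFne
    set sτ : Finset ℝ := Fs.image τof with hsτ
    have hsτne : sτ.Nonempty := hFsne.image τof
    refine ⟨sτ.min' hsτne, sτ.max' hsτne, ?_, sτ.min'_le _ (sτ.max'_mem hsτne), ?_⟩
    · obtain ⟨i, hi, hieq⟩ := Finset.mem_image.mp (sτ.min'_mem hsτne)
      have hiΛ : i ∈ Λ := hFsub (hFfin.mem_toFinset.mp hi)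
      rw [← hieq]
      exact hτpos i hiΛ
    · intro z hz
      obtain ⟨i, hiF, hiz⟩ := mem_iUnion₂.mp (hFcov hz)
      have hiFs : i ∈ Fs := hFfin.mem_toFinset.mpr hiF
      have hmem : τof i ∈ sτ := Finset.mem_image_of_mem τof hiFs
      exact ⟨τof i, sτ.min'_le _ hmem, sτ.le_max' _ hmem, hiz⟩
  obtain ⟨m0, N, hm0, hm0N, hB⟩ := stepB
  have hN : 0 < N := lt_of_lt_of_le hm0 hm0N
  -- a uniform bound for `g` on `[0, N] × M`
  obtain ⟨x₀, hx₀⟩ := hΛne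
  obtain ⟨B, hB1, hBbd⟩ :
      ∃ B : ℝ, 1 ≤ B ∧ ∀ s ∈ Icc (0 : ℝ) N, ∀ z : M, g s z ≤ B := by
    have hcomp : IsCompact (Icc (0 : ℝ) N ×ˢ (univ : Set M)) :=
      isCompact_Icc.prod isCompact_univ
    have hne : (Icc (0 : ℝ) N ×ˢ (univ : Set M)).Nonempty :=
      ⟨(0, x₀), ⟨⟨le_refl 0, hN.le⟩, mem_univ _⟩⟩
    obtain ⟨p, -, hmax⟩ := hcomp.exists_isMaxOn hne hgc.continuousOn
    refine ⟨max (g p.1 p.2) 1, le_max_right _ _, fun s hs z => ?_⟩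
    have := hmax (a := (s, z)) ⟨hs, mem_univ z⟩
    exact le_max_of_le_left this
  -- choice of good time for each point of Λ
  choose! pick hpick1 hpick2 hpick3 using hB
  -- the answer
  refine ⟨2 * B, by linarith, Real.log 2 / N, div_pos (Real.log_pos (by norm_num)) hN, ?_⟩
  intro x hx t ht
  set tj : ℕ → ℝ := iterSeq φ pick x with htj_def
  -- properties of the time sequence
  have hprop : ∀ j : ℕ, φ (-(tj j)) x ∈ Λ ∧ (j : ℝ) * m0 ≤ tj j ∧ tj j ≤ (j : ℝ) * N ∧
      g (tj j) x ≤ (1 / 2 : ℝ) ^ j := by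
    intro j
    induction j with
    | zero =>
      refine ⟨?_, by simp [htj_def], by simp [htj_def], by simp [htj_def, hg0]⟩
      simp only [htj_def, iterSeq_zero, neg_zero, hφ0]
      exact hx
    | succ j ih =>
      obtain ⟨hmem, hlb, hub, hgb⟩ := ih
      have hp1 := hpick1 _ hmem
      have hp2 := hpick2 _ hmem
      have hp3 := hpick3 _ hmem
      have hrec : tj (j + 1) = tj j + pick (φ (-(tj j)) x) := iterSeq_succ φ pick x j
      have hφsplit : φ (-(tj (j + 1))) x
          = φ (-(pick (φ (-(tj j)) x))) (φ (-(tj j)) x) := by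
        rw [hrec, ← hφadd]
        ring_nf
      refine ⟨?_, ?_, ?_, ?_⟩
      · rw [hφsplit]; exact hinv _ _ hmem
      · rw [hrec]; push_cast; nlinarith
      · rw [hrec]; push_cast; nlinarith
      · have hco : g (tj (j + 1)) x = g (pick (φ (-(tj j)) x)) (φ (-(tj j)) x) * g (tj j) x := by
          rw [hrec, add_comm, hgcoc]
        rw [hco]
        have hgpos' := (hgpos (tj j) x).le
        calc g (pick (φ (-(tj j)) x)) (φ (-(tj j)) x) * g (tj j) x
            ≤ (1 / 2) * ((1 / 2 : ℝ) ^ j) :=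
              mul_le_mul hp3.le hgb hgpos' (by norm_num)
          _ = (1 / 2 : ℝ) ^ (j + 1) := by ring
  -- find the bracketing index
  have hex : ∃ k : ℕ, t < tj k := by
    obtain ⟨k, hk⟩ := exists_nat_gt (t / m0)
    refine ⟨k, ?_⟩
    have h1 := (hprop k).2.1
    have h2 : t < (k : ℝ) * m0 := by
      rw [div_lt_iff₀ hm0] at hk
      linarith
    linarith
  set k₀ : ℕ := Nat.find hex with hk₀
  have hk₀pos : k₀ ≠ 0 := by
    intro h
    have := Nat.find_spec hex
    rw [← hk₀, h] at this
    simp [htj_def] at this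
    linarith
  set j : ℕ := k₀ - 1 with hj
  have hjsucc : j + 1 = k₀ := by omega
  have hle : tj j ≤ t := by
    by_contra hcon
    push_neg at hcon
    exact Nat.find_min hex (by omega : j < k₀) hcon
  have hlt : t < tj (j + 1) := by
    rw [hjsucc]
    exact Nat.find_spec hex
  obtain ⟨hmem, hlb, hub, hgb⟩ := hprop j
  have hrec : tj (j + 1) = tj j + pick (φ (-(tj j)) x) := iterSeq_succ φ pick x j
  have hpN : pick (φ (-(tj j)) x) ≤ N := hpick2 _ hmem
  -- split g t x
  have hsplit : g t x = g (t - tj j) (φ (-(tj j)) x) * g (tj j) x := by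
    have : t = (t - tj j) + tj j := by ring
    rw [this] at *
    rw [hgcoc]
    ring_nf
  have hdiff : t - tj j ∈ Icc (0 : ℝ) N := by
    constructor
    · linarith
    · have : t - tj j < pick (φ (-(tj j)) x) := by
        rw [hrec] at hlt; linarith
      linarith
  have hBd : g (t - tj j) (φ (-(tj j)) x) ≤ B := hBbd _ hdiff _
  have hg1 : g t x ≤ B * (1 / 2 : ℝ) ^ j := by
    rw [hsplit]
    exact mul_le_mul hBd hgb (hgpos _ _).le (by linarith)
  -- final numeric estimate
  have hub' : tj (j + 1) ≤ ((j : ℝ) + 1) * N := by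
    have := (hprop (j + 1)).2.2.1
    push_cast at this
    linarith
  have hlog2 : 0 < Real.log 2 := Real.log_pos (by norm_num)
  have htle : Real.log 2 / N * t ≤ ((j : ℝ) + 1) * Real.log 2 := by
    have h1 : t ≤ ((j : ℝ) + 1) * N := le_trans hlt.le hub'
    rw [div_mul_eq_mul_div, div_le_iff₀ hN]
    nlinarith
  have hexp : (1 / 2 : ℝ) ^ (j + 1) ≤ Real.exp (-(Real.log 2 / N) * t) := by
    have h1 : Real.exp (-(((j : ℝ) + 1) * Real.log 2)) ≤ Real.exp (-(Real.log 2 / N) * t) := by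
      apply Real.exp_le_exp.mpr
      linarith
    have h2 : Real.exp (-(((j : ℝ) + 1) * Real.log 2)) = (1 / 2 : ℝ) ^ (j + 1) := by
      have : -(((j : ℝ) + 1) * Real.log 2) = ((j + 1 : ℕ) : ℝ) * (-Real.log 2) := by
        push_cast; ring
      rw [this, Real.exp_nat_mul, Real.exp_neg, Real.exp_log (by norm_num : (0:ℝ) < 2)]
      norm_num
    linarith [h2 ▸ h1]
  calc g t x ≤ B * (1 / 2 : ℝ) ^ j := hg1
    _ = 2 * B * (1 / 2 : ℝ) ^ (j + 1) := by ring
    _ ≤ 2 * B * Real.exp (-(Real.log 2 / N) * t) := by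
        apply mul_le_mul_of_nonneg_left hexp (by linarith)
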